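/- arXiv:1604.05230 — 2 statements merged into one kernel-verified Lean document; each statement's English description precedes it below -/
import Mathlib

section
/- Let a ∈ ℝⁿ with a ≠ 0 and define f(x) = -a/|a| + 2|a|(x + a)/|x + a|² for x ≠ -a. Then for every x in the hyperplane L(a,0) = {x ∈ ℝⁿ : ⟨x, a⟩ = 0}, one has |f(x)| = 1; that is, f maps the hyperplane L(a,0) into the unit sphere S(0,1). -/
open RealInnerProductSpace

/-- The Möbius map `f(x) = -a/|a| + 2|a|(x+a)/|x+a|²` sends the hyperplane
`L(a,0) = {x : ⟪x,a⟫ = 0}` into the unit sphere `S(0,1)`. -/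
theorem mobius_maps_hyperplane_to_sphere (n : ℕ) (hn : 2 ≤ n)
    (a : EuclideanSpace ℝ (Fin n)) (ha : a ≠ 0)
    (f : EuclideanSpace ℝ (Fin n) → EuclideanSpace ℝ (Fin n))
    (hf : ∀ x, x ≠ -a → f x = -(‖a‖⁻¹ • a) + (2 * ‖a‖ / ‖x + a‖ ^ 2) • (x + a)) :
    ∀ x : EuclideanSpace ℝ (Fin n), ⟪x, a⟫ = 0 → ‖f x‖ = 1 := by
  intro x hx
  have hna : ‖a‖ ≠ 0 := norm_ne_zero_iff.mpr ha
  have hxa : x ≠ -a := by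
    intro h
    rw [h, inner_neg_left, real_inner_self_eq_norm_sq, neg_eq_zero] at hx
    exact hna (by nlinarith)
  have hxa0 : x + a ≠ 0 := by
    intro h
    exact hxa (by rw [eq_neg_iff_add_eq_zero]; exact h)
  have hN : ‖x + a‖ ≠ 0 := norm_ne_zero_iff.mpr hxa0
  have h1 : ⟪x + a, a⟫ = ‖a‖ ^ 2 := by
    rw [inner_add_left, hx, real_inner_self_eq_norm_sq]; ring
  rw [hf x hxa]
  have key : ‖-(‖a‖⁻¹ • a) + (2 * ‖a‖ / ‖x + a‖ ^ 2) • (x + a)‖ ^ 2 = 1 := by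
    rw [norm_add_sq_real, inner_neg_left, inner_smul_left, real_inner_smul_right,
      norm_neg, norm_smul, norm_smul]
    rw [real_inner_comm] at h1
    rw [h1]
    simp only [norm_inv, norm_norm, Real.norm_eq_abs, RCLike.ofReal_real_eq_id, id, conj_trivial, abs_norm]
    rw [abs_of_nonneg (by positivity : (0:ℝ) ≤ 2 * ‖a‖ / ‖x + a‖ ^ 2)]
    field_simp
    ring
  have hnn : 0 ≤ ‖-(‖a‖⁻¹ • a) + (2 * ‖a‖ / ‖x + a‖ ^ 2) • (x + a)‖ := norm_nonneg _
  nlinarith [key]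
end

section
/- Let c ∈ ℝⁿ with 0 < |c| < 1, and set b = ((1 + √(1 - |c|²))/|c|²) c and ρ² = |b|² - 1. Then the inversion f₂(y) = b + ρ²(y - b)/|y - b|² satisfies f₂(0) = -f₂(c), i.e., it maps the points 0 and c to a pair of points symmetric with respect to the origin. -/
/-- The inversion `f₂(y) = b + ρ²(y-b)/|y-b|²` with
`b = ((1 + √(1-|c|²))/|c|²) c`, `ρ² = |b|² - 1`, maps `0` and `c` to a pair of
points symmetric with respect to the origin. -/
theorem inversion_f2_symmetric (n : ℕ) (hn : 2 ≤ n)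
    (c : EuclideanSpace ℝ (Fin n)) (hc : c ≠ 0) (hc' : ‖c‖ < 1)
    (b : EuclideanSpace ℝ (Fin n))
    (hb : b = ((1 + Real.sqrt (1 - ‖c‖ ^ 2)) / ‖c‖ ^ 2) • c)
    (ρ2 : ℝ) (hρ2 : ρ2 = ‖b‖ ^ 2 - 1)
    (f₂ : EuclideanSpace ℝ (Fin n) → EuclideanSpace ℝ (Fin n))
    (hf₂ : ∀ y, y ≠ b → f₂ y = b + (ρ2 / ‖y - b‖ ^ 2) • (y - b)) :
    f₂ 0 = -f₂ c := by
  have hk : 0 < ‖c‖ := norm_pos_iff.mpr hc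
  have hk2 : ‖c‖ ^ 2 < 1 := by nlinarith
  set s : ℝ := Real.sqrt (1 - ‖c‖ ^ 2) with hs_def
  have hs2 : s ^ 2 = 1 - ‖c‖ ^ 2 := Real.sq_sqrt (by nlinarith)
  have hs : 0 < s := Real.sqrt_pos.mpr (by nlinarith)
  set k : ℝ := ‖c‖ ^ 2 with hk_def
  have hkpos : 0 < k := by positivity
  set t : ℝ := (1 + s) / k with ht_def
  have ht1 : 1 < t := by
    rw [ht_def, lt_div_iff₀ hkpos]; nlinarith
  have hbt : b = t • c := hb
  have hnb : ‖b‖ ^ 2 = t ^ 2 * k := by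
    rw [hbt, norm_smul]
    rw [mul_pow, Real.norm_eq_abs, sq_abs, hk_def]
  have hcb : c - b = (1 - t) • c := by
    rw [hbt, sub_smul, one_smul]
  have hncb : ‖c - b‖ ^ 2 = (1 - t) ^ 2 * k := by
    rw [hcb, norm_smul, mul_pow, Real.norm_eq_abs, sq_abs, hk_def]
  have h0b : (0 : EuclideanSpace ℝ (Fin n)) ≠ b := by
    rw [hbt]
    intro h
    apply hc
    have := h.symm
    rwa [smul_eq_zero, or_iff_right (by positivity : t ≠ 0)] at this
  have hcbne : c ≠ b := by
    intro h
    have : c - b = 0 := sub_eq_zero.mpr h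
    rw [hcb, smul_eq_zero] at this
    rcases this with h' | h'
    · linarith [sub_eq_zero.mp (by linarith : (1:ℝ) - t = 0)]
    · exact hc h'
  rw [hf₂ 0 h0b, hf₂ c hcbne, zero_sub, norm_neg, hnb, hncb, hcb, hbt, hρ2, hnb]
  have h1t : (1 : ℝ) - t ≠ 0 := by intro h; nlinarith
  have htne : t ≠ 0 := by positivity
  match_scalars
  field_simp
  rw [ht_def]
  field_simp
  linear_combination (‖c‖^2) * hs2
end
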